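/- For every Young diagram λ inside the k×(n−k) rectangle and every reduced decomposition w_λ = s_{i_ℓ} ⋯ s_{i_1} (so ℓ = |λ|), one has Q_{w_λ·𝟏} = ∇_{i_ℓ}(∇_{i_{ℓ−1}}(⋯ ∇_{i_1}(x_{k+1} x_{k+2} ⋯ x_n) ⋯)). In particular, the right-hand side does not depend on the choice of reduced decomposition of w_λ. -/

import Mathlib

open scoped Classical

set_option maxHeartbeats 1000000
set_option synthInstance.maxHeartbeats 1000000

noncomputable section

/-- The field ℚ(v) of rational functions. -/
abbrev F : Type := RatFunc ℚ

/-- The variable v. -/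
def v : F := RatFunc.X

/-- The quantum integer [r] = (v^r - v^{-r})/(v - v^{-1}). -/
def qint (r : ℕ) : F := (v ^ r - v⁻¹ ^ r) / (v - v⁻¹)

/-- Sequences of n signs (`true` = `+`) with exactly k pluses. -/
abbrev Stt (n k : ℕ) := {ε : Fin n → Bool // (Finset.univ.filter fun t => ε t = true).card = k}

/-- The adjacent transposition s_m ∈ S_n (1-based: swaps positions m and m+1). -/
def sperm (n m : ℕ) : Equiv.Perm (Fin n) :=
  if h : 1 ≤ m ∧ m < n then Equiv.swap ⟨m - 1, by omega⟩ ⟨m, h.2⟩ else 1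

/-- Action of w ∈ S_n on sequences: (w·ε)_{w(t)} = ε_t. -/
def actE {n : ℕ} (w : Equiv.Perm (Fin n)) (ε : Fin n → Bool) : Fin n → Bool :=
  fun u => ε (w⁻¹ u)

lemma card_actE {n k : ℕ} (w : Equiv.Perm (Fin n)) (ε : Fin n → Bool)
    (h : (Finset.univ.filter fun t => ε t = true).card = k) :
    (Finset.univ.filter fun t => actE w ε t = true).card = k := by
  rw [← h]
  apply Finset.card_bij (fun t _ => w⁻¹ t)
  · intro a ha
    have := (Finset.mem_filter.mp ha).2
    simpa [actE] using this
  · intro a _ b _ hab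
    exact (Equiv.injective _) hab
  · intro b hb
    refine ⟨w b, Finset.mem_filter.mpr ⟨Finset.mem_univ _, ?_⟩, by simp⟩
    simpa [actE] using (Finset.mem_filter.mp hb).2

/-- Action of S_n on the set E of sequences with k pluses. -/
def actS {n k : ℕ} (w : Equiv.Perm (Fin n)) (ε : Stt n k) : Stt n k :=
  ⟨actE w ε.1, card_actE w ε.1 ε.2⟩

/-- The module M, free over ℚ(v) with basis E. -/
abbrev M (n k : ℕ) := Stt n k → F

/-- The basis vector of M corresponding to ε ∈ E. -/
def bv {n k : ℕ} (ε : Stt n k) : M n k := Pi.single ε 1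

/-- The sequence 𝟏 = (+,…,+,−,…,−) (k pluses then n−k minuses). -/
def oneSeq (n k : ℕ) : Fin n → Bool := fun t => decide ((t : ℕ) < k)

lemma card_oneSeq (n k : ℕ) (h : k ≤ n) :
    (Finset.univ.filter fun t => oneSeq n k t = true).card = k := by
  have : (Finset.univ.filter fun t => oneSeq n k t = true)
      = Finset.univ.map (Fin.castLEEmb h) := by
    ext t
    simp only [Finset.mem_filter, Finset.mem_univ, true_and, oneSeq, decide_eq_true_eq,
      Finset.mem_map]
    constructor
    · intro ht; exact ⟨⟨t, ht⟩, rfl⟩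
    · rintro ⟨s, rfl⟩; exact s.2
  rw [this, Finset.card_map, Finset.card_univ, Fintype.card_fin]

/-- 𝟏 as an element of E. -/
def oneS (n k : ℕ) (h : k ≤ n) : Stt n k := ⟨oneSeq n k, card_oneSeq n k h⟩

/-- The operator T_m on M (1 ≤ m ≤ n−1), defined on basis elements. -/
def Thk (n k : ℕ) (m : ℕ) : M n k →ₗ[F] M n k :=
  (Pi.basisFun F (Stt n k)).constr ℕ fun ε =>
    if h : 1 ≤ m ∧ m < n then
      let a := ε.1 ⟨m - 1, by omega⟩
      let b := ε.1 ⟨m, h.2⟩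
      if a = true ∧ b = false then bv (actS (sperm n m) ε)
      else if a = b then (-v⁻¹) • bv ε
      else bv (actS (sperm n m) ε) + (v - v⁻¹) • bv ε
    else 0

/-- A Young diagram inside the k×(n−k) rectangle, given by its row lengths
(1-based: row i has lam i boxes). -/
def IsYoung (n k : ℕ) (lam : ℕ → ℕ) : Prop :=
  (∀ i, 1 ≤ i → lam (i + 1) ≤ lam i) ∧ lam 1 ≤ n - k ∧ (∀ i, k < i → lam i = 0)

/-- The boxes of λ, listed row by row from the bottom row to the top row,
each row from its last box to its first (so box (1,1) comes last). -/
def boxList (k : ℕ) (lam : ℕ → ℕ) : List (ℕ × ℕ) :=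
  ((List.range k).reverse.map fun i' =>
    (List.range (lam (i' + 1))).reverse.map fun j' => (i' + 1, j' + 1)).flatten

/-- The word of w_λ: letter k+j−i for box (i,j). -/
def wword (k : ℕ) (lam : ℕ → ℕ) : List ℕ := (boxList k lam).map fun b => k + b.2 - b.1

/-- The permutation w_λ = ∏_{(i,j)∈λ} s_{k+j−i} (box (1,1) rightmost). -/
def wperm (n k : ℕ) (lam : ℕ → ℕ) : Equiv.Perm (Fin n) := ((wword k lam).map (sperm n)).prod

/-- w_λ·𝟏 as an element of E. -/
def wSt (n k : ℕ) (h : k ≤ n) (lam : ℕ → ℕ) : Stt n k := actS (wperm n k lam) (oneS n k h)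

/-- r is the system of shifts of λ: r_{ij} = max(r_{i,j+1}, r_{i+1,j}) + 1 on boxes of λ,
and r_{ij} = 0 off λ. -/
def IsShifts (lam : ℕ → ℕ) (r : ℕ → ℕ → ℕ) : Prop :=
  ∀ i j, r i j = if 1 ≤ i ∧ 1 ≤ j ∧ j ≤ lam i then max (r i (j + 1)) (r (i + 1) j) + 1 else 0

/-- The operator X_λ = ∏_{(i,j)∈λ} (T_{k+j−i} − v^{r_{ij}}/[r_{ij}]), the factor of
box (1,1) applied first. -/
def Xop (n k : ℕ) (lam : ℕ → ℕ) (r : ℕ → ℕ → ℕ) : Module.End F (M n k) :=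
  ((boxList k lam).map fun b =>
    (Thk n k (k + b.2 - b.1) - (v ^ r b.1 b.2 / qint (r b.1 b.2)) • (1 : Module.End F (M n k)) : Module.End F (M n k))).prod

/-- O(v^m): rational functions with a zero of order ≥ m at v = 0. -/
def Ozero (m : ℕ) : Set F :=
  {f | ∃ p q : Polynomial ℚ, Polynomial.eval 0 q ≠ 0 ∧
        f = v ^ m * (algebraMap (Polynomial ℚ) F p / algebraMap (Polynomial ℚ) F q)}

/-- Value of a sequence at the 1-based position t. -/
def posVal {n : ℕ} (ε : Fin n → Bool) (t : ℕ) : Bool :=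
  if h : 1 ≤ t ∧ t ≤ n then ε ⟨t - 1, by omega⟩ else false

/-- a(i) = k + λ_i − i + 1 for 1 ≤ i ≤ k, and a(i) = 0 for i > k. -/
def aF (k : ℕ) (lam : ℕ → ℕ) (i : ℕ) : ℕ := if i ≤ k then k + lam i + 1 - i else 0

/-- The contribution r_t(ε) to the weight. -/
def weightT (k : ℕ) (lam : ℕ → ℕ) (r : ℕ → ℕ → ℕ) {n : ℕ} (ε : Fin n → Bool) (t : ℕ) : ℕ :=
  ∑ i ∈ Finset.Icc 1 k,
    ((if posVal ε t = false ∧ 1 ≤ lam i ∧ t = aF k lam i then r i (lam i) - 1 else 0) +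
     (if posVal ε t = true ∧ aF k lam (i + 1) < t ∧ t < aF k lam i then r i (t + i - k) else 0))

/-- The weight r_λ(ε) = Σ_{t=1}^n r_t(ε). -/
def weight (n k : ℕ) (lam : ℕ → ℕ) (r : ℕ → ℕ → ℕ) (ε : Fin n → Bool) : ℕ :=
  ∑ t ∈ Finset.Icc 1 n, weightT k lam r ε t

/-- 𝓛_λ = Σ_ε O(v^{r_λ(ε)}) ε. -/
def Lset (n k : ℕ) (lam : ℕ → ℕ) (r : ℕ → ℕ → ℕ) : Set (M n k) :=
  {m | ∀ ε : Stt n k, m ε ∈ Ozero (weight n k lam r ε.1)}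

/-- The length (number of inversions) of a permutation. -/
def len {n : ℕ} (w : Equiv.Perm (Fin n)) : ℕ :=
  (Finset.univ.filter fun p : Fin n × Fin n => p.1 < p.2 ∧ w p.2 < w p.1).card

/-- The parabolic subgroup W_J = S_k × S_{n−k}: permutations mapping {1,…,k} to itself. -/
def WJ (n k : ℕ) : Set (Equiv.Perm (Fin n)) :=
  {σ | ∀ t : Fin n, (t : ℕ) < k → ((σ t : ℕ) < k)}

/-- W^J: permutations of minimal length in their coset w·W_J. -/
def Wmin (n k : ℕ) : Set (Equiv.Perm (Fin n)) :=
  {w | ∀ σ ∈ WJ n k, len w ≤ len (w * σ)}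

/-- The variable x_p (1-based position p) in ℚ(v)[x_1,…,x_n]. -/
def xv (n p : ℕ) : MvPolynomial (Fin n) F :=
  if h : 1 ≤ p ∧ p ≤ n then MvPolynomial.X ⟨p - 1, by omega⟩ else 0

/-- Exchange of the variables x_i and x_{i+1} (1-based, 1 ≤ i ≤ n−1). -/
def swapf (n i : ℕ) (f : MvPolynomial (Fin n) F) : MvPolynomial (Fin n) F :=
  if h : 1 ≤ i ∧ i < n then
    MvPolynomial.rename (Equiv.swap ⟨i - 1, by omega⟩ ⟨i, h.2⟩) f
  else f

/-- The divided difference ∂_i f = (f − s_i f)/(x_i − x_{i+1}). -/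
def ddiff (n i : ℕ) (f : MvPolynomial (Fin n) F) : MvPolynomial (Fin n) F :=
  if h : ∃ g, f - swapf n i f = (xv n i - xv n (i + 1)) * g then h.choose else 0

/-- The operator ∇_i f = (v x_{i+1} − v⁻¹ x_i)·∂_i f. -/
def nabla (n i : ℕ) (f : MvPolynomial (Fin n) F) : MvPolynomial (Fin n) F :=
  (MvPolynomial.C v * xv n (i + 1) - MvPolynomial.C v⁻¹ * xv n i) * ddiff n i f

/-- Parenthesis matching: minuses (`false`) are openers, pluses (`true`) are closers;
each plus is matched with the most recent unmatched minus, i.e. each minus with the first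
subsequent unmatched plus.  Returns the list of matched pairs (p,q) of 1-based positions
and the list of unmatched minus positions. -/
def matchAux : List Bool → ℕ → List ℕ → List (ℕ × ℕ) × List ℕ
  | [], _, stack => ([], stack)
  | b :: rest, pos, stack =>
    if b then
      match stack with
      | [] => matchAux rest (pos + 1) []
      | p :: stack' =>
        let res := matchAux rest (pos + 1) stack'
        ((p, pos) :: res.1, res.2)
    else matchAux rest (pos + 1) (pos :: stack)

/-- d(ε) = #{(p,q) : p < q, ε_p = −, ε_q = +}. -/
def dstat {n : ℕ} (ε : Fin n → Bool) : ℕ :=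
  (Finset.univ.filter fun pq : Fin n × Fin n =>
    pq.1 < pq.2 ∧ ε pq.1 = false ∧ ε pq.2 = true).card

/-- The polynomial Q_ε. -/
def Qpoly (n : ℕ) (ε : Fin n → Bool) : MvPolynomial (Fin n) F :=
  MvPolynomial.C (v⁻¹ ^ dstat ε) *
    ((matchAux (List.ofFn ε) 1 []).1.map fun pq =>
        xv n pq.1 - MvPolynomial.C (v ^ (pq.2 + 1 - pq.1)) * xv n pq.2).prod *
    ((matchAux (List.ofFn ε) 1 []).2.map fun p => xv n p).prod

/-- The operator T_m on M′ (the parabolic module induced from T_j ↦ v). -/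
def Thk' (n k : ℕ) (m : ℕ) : M n k →ₗ[F] M n k :=
  (Pi.basisFun F (Stt n k)).constr ℕ fun ε =>
    if h : 1 ≤ m ∧ m < n then
      let a := ε.1 ⟨m - 1, by omega⟩
      let b := ε.1 ⟨m, h.2⟩
      if a = true ∧ b = false then bv (actS (sperm n m) ε)
      else if a = b then v • bv ε
      else bv (actS (sperm n m) ε) + (v - v⁻¹) • bv ε
    else 0

/-- The map Φ : M′ → ℚ(v)[x_1,…,x_n], ε ↦ v^{−d(ε)} ∏_{t : ε_t = −} x_t. -/
def Phi (n k : ℕ) : M n k →ₗ[F] MvPolynomial (Fin n) F :=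
  (Pi.basisFun F (Stt n k)).constr ℕ fun ε =>
    MvPolynomial.C (v⁻¹ ^ dstat ε.1) *
      ∏ t ∈ Finset.univ.filter (fun t => ε.1 t = false), MvPolynomial.X t

/-- The space P(k,n): polynomials homogeneous of total degree n−k, of degree ≤ 1 in each
variable. -/
def Pspace (n k : ℕ) : Set (MvPolynomial (Fin n) F) :=
  {f | f.IsHomogeneous (n - k) ∧ ∀ t : Fin n, f.degreeOf t ≤ 1}


lemma matchAux_nil (pos : ℕ) (st : List ℕ) : matchAux [] pos st = ([], st) := rfl

lemma matchAux_false (rest : List Bool) (pos : ℕ) (st : List ℕ) :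
    matchAux (false :: rest) pos st = matchAux rest (pos + 1) (pos :: st) := rfl

lemma matchAux_true_nil (rest : List Bool) (pos : ℕ) :
    matchAux (true :: rest) pos [] = matchAux rest (pos + 1) [] := rfl

lemma matchAux_true_cons (rest : List Bool) (pos p : ℕ) (st : List ℕ) :
    matchAux (true :: rest) pos (p :: st) =
      ((p, pos) :: (matchAux rest (pos + 1) st).1, (matchAux rest (pos + 1) st).2) := rfl

lemma matchAux_append (l1 l2 : List Bool) (pos : ℕ) (st : List ℕ) :
    matchAux (l1 ++ l2) pos st =
      ((matchAux l1 pos st).1 ++ (matchAux l2 (pos + l1.length) (matchAux l1 pos st).2).1,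
        (matchAux l2 (pos + l1.length) (matchAux l1 pos st).2).2) := by
  induction l1 generalizing pos st with
  | nil => simp [matchAux_nil]
  | cons b l1 ih =>
    cases b with
    | false =>
      rw [List.cons_append, matchAux_false, matchAux_false, ih]
      simp [Nat.add_assoc, Nat.add_comm 1]
    | true =>
      cases st with
      | nil =>
        rw [List.cons_append, matchAux_true_nil, matchAux_true_nil, ih]
        simp [Nat.add_assoc, Nat.add_comm 1]
      | cons p st' =>
        rw [List.cons_append, matchAux_true_cons, matchAux_true_cons, ih]
        simp [Nat.add_assoc, Nat.add_comm 1]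

lemma matchAux_subst (l : List Bool) (pos : ℕ) (s1 s2 : List ℕ) (a b : ℕ) :
    (∃ X Y q, (matchAux l pos (s1 ++ a :: s2)).1 = X ++ (a, q) :: Y ∧
        (matchAux l pos (s1 ++ b :: s2)).1 = X ++ (b, q) :: Y ∧
        (matchAux l pos (s1 ++ a :: s2)).2 = (matchAux l pos (s1 ++ b :: s2)).2) ∨
    ((matchAux l pos (s1 ++ a :: s2)).1 = (matchAux l pos (s1 ++ b :: s2)).1 ∧
      ∃ T1 T2, (matchAux l pos (s1 ++ a :: s2)).2 = T1 ++ a :: T2 ∧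
        (matchAux l pos (s1 ++ b :: s2)).2 = T1 ++ b :: T2) := by
  induction l generalizing pos s1 with
  | nil => exact Or.inr ⟨rfl, s1, s2, rfl, rfl⟩
  | cons c l ih =>
    cases c with
    | false =>
      rw [matchAux_false, matchAux_false]
      exact ih (pos + 1) (pos :: s1)
    | true =>
      cases s1 with
      | nil =>
        simp only [List.nil_append, matchAux_true_cons]
        exact Or.inl ⟨[], (matchAux l (pos + 1) s2).1, pos, by simp, by simp, by simp⟩
      | cons h s1' =>
        simp only [List.cons_append, matchAux_true_cons]
        rcases ih (pos + 1) s1' with ⟨X, Y, q, h1, h2, h3⟩ | ⟨h1, T1, T2, h2, h3⟩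
        · exact Or.inl ⟨(h, pos) :: X, Y, q, by rw [h1]; rfl, by rw [h2]; rfl, h3⟩
        · exact Or.inr ⟨by rw [h1], T1, T2, h2, h3⟩

lemma matchAux_bot (l : List Bool) (pos : ℕ) (st : List ℕ) (a : ℕ) :
    (∃ X Y q, (matchAux l pos (st ++ [a])).1 = X ++ (a, q) :: Y ∧
        (matchAux l pos st).1 = X ++ Y ∧
        (matchAux l pos (st ++ [a])).2 = (matchAux l pos st).2) ∨
    ((matchAux l pos (st ++ [a])).1 = (matchAux l pos st).1 ∧
      (matchAux l pos (st ++ [a])).2 = (matchAux l pos st).2 ++ [a]) := by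
  induction l generalizing pos st with
  | nil => exact Or.inr ⟨rfl, rfl⟩
  | cons c l ih =>
    cases c with
    | false =>
      rw [matchAux_false, matchAux_false]
      exact ih (pos + 1) (pos :: st)
    | true =>
      cases st with
      | nil =>
        simp only [List.nil_append, matchAux_true_cons, matchAux_true_nil]
        exact Or.inl ⟨[], (matchAux l (pos + 1) []).1, pos, by simp, by simp, by simp⟩
      | cons h st' =>
        simp only [List.cons_append, matchAux_true_cons]
        rcases ih (pos + 1) st' with ⟨X, Y, q, h1, h2, h3⟩ | ⟨h1, h2⟩
        · exact Or.inl ⟨(h, pos) :: X, Y, q, by rw [h1]; rfl, by rw [h2]; rfl, h3⟩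
        · exact Or.inr ⟨by rw [h1], h2⟩

lemma matchAux_mem (l : List Bool) (pos : ℕ) (st : List ℕ) :
    (∀ pq ∈ (matchAux l pos st).1,
        (pq.1 ∈ st ∨ (pos ≤ pq.1 ∧ pq.1 < pos + l.length)) ∧
        pos ≤ pq.2 ∧ pq.2 < pos + l.length) ∧
    (∀ x ∈ (matchAux l pos st).2, x ∈ st ∨ (pos ≤ x ∧ x < pos + l.length)) := by
  induction l generalizing pos st with
  | nil => exact ⟨by simp [matchAux_nil], fun x hx => Or.inl (by simpa [matchAux_nil] using hx)⟩
  | cons c l ih =>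
    simp only [List.length_cons]
    cases c with
    | false =>
      rw [matchAux_false]
      obtain ⟨ih1, ih2⟩ := ih (pos + 1) (pos :: st)
      constructor
      · intro pq hpq
        obtain ⟨h1, h2, h3⟩ := ih1 pq hpq
        refine ⟨?_, by omega, by omega⟩
        rcases h1 with h | h
        · rcases List.mem_cons.mp h with h | h
          · right; omega
          · left; exact h
        · right; omega
      · intro x hx
        rcases ih2 x hx with h | h
        · rcases List.mem_cons.mp h with h | h
          · right; omega
          · left; exact h
        · right; omega
    | true =>
      cases st with
      | nil =>
        rw [matchAux_true_nil]
        obtain ⟨ih1, ih2⟩ := ih (pos + 1) []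
        constructor
        · intro pq hpq
          obtain ⟨h1, h2, h3⟩ := ih1 pq hpq
          refine ⟨?_, by omega, by omega⟩
          rcases h1 with h | h
          · exact absurd h List.not_mem_nil
          · right; omega
        · intro x hx
          rcases ih2 x hx with h | h
          · exact absurd h List.not_mem_nil
          · right; omega
      | cons p st' =>
        rw [matchAux_true_cons]
        obtain ⟨ih1, ih2⟩ := ih (pos + 1) st'
        constructor
        · intro pq hpq
          rcases List.mem_cons.mp hpq with h | h
          · subst h
            exact ⟨Or.inl List.mem_cons_self, by omega, by omega⟩
          · obtain ⟨h1, h2, h3⟩ := ih1 pq h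
            refine ⟨?_, by omega, by omega⟩
            rcases h1 with h | h
            · left; exact List.mem_cons_of_mem _ h
            · right; omega
        · intro x hx
          rcases ih2 x hx with h | h
          · left; exact List.mem_cons_of_mem _ h
          · right; omega


lemma swap_lt {n : ℕ} {a b x y : Fin n} (hab : (a : ℕ) + 1 = (b : ℕ)) (hxy : x < y)
    (hne : ¬(x = a ∧ y = b)) : Equiv.swap a b x < Equiv.swap a b y := by
  rw [Equiv.swap_apply_def, Equiv.swap_apply_def]
  simp only [Fin.ext_iff, not_and] at hne
  split_ifs with h1 h2 h3 h4 h5 h6 h7 h8 <;>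
    simp only [Fin.lt_def, Fin.ext_iff] at * <;> omega

lemma actE_eq {n : ℕ} (m : ℕ) (h : 1 ≤ m ∧ m < n) (ε : Fin n → Bool) :
    actE (sperm n m) ε = fun u => ε (Equiv.swap ⟨m - 1, by omega⟩ ⟨m, h.2⟩ u) := by
  funext u
  simp [actE, sperm, dif_pos h, Equiv.swap_inv]

def goodstep {n : ℕ} (ε : Fin n → Bool) (m : ℕ) : Prop :=
  ∃ h : 1 ≤ m ∧ m < n, ε ⟨m - 1, by omega⟩ = true ∧ ε ⟨m, h.2⟩ = false

lemma dstat_core {n : ℕ} (ε : Fin n → Bool) (m : ℕ) (h : 1 ≤ m ∧ m < n) :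
    dstat (actE (sperm n m) ε) +
        (if ε ⟨m - 1, by omega⟩ = false ∧ ε ⟨m, h.2⟩ = true then 1 else 0) =
      dstat ε + (if ε ⟨m - 1, by omega⟩ = true ∧ ε ⟨m, h.2⟩ = false then 1 else 0) := by
  set a : Fin n := ⟨m - 1, by omega⟩ with ha
  set b : Fin n := ⟨m, h.2⟩ with hb
  have hab : (a : ℕ) + 1 = (b : ℕ) := by simp [ha, hb]; omega
  have haltb : a < b := by simp [Fin.lt_def, ha, hb]; omega
  set s := Equiv.swap a b with hs
  have hsa : s a = b := Equiv.swap_apply_left a b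
  have hsb : s b = a := Equiv.swap_apply_right a b
  have hss : ∀ u, s (s u) = u := fun u => Equiv.swap_apply_self a b u
  rw [actE_eq m h ε]
  set SA := Finset.univ.filter fun pq : Fin n × Fin n =>
    pq.1 < pq.2 ∧ ε (s pq.1) = false ∧ ε (s pq.2) = true with hSA
  set SB := Finset.univ.filter fun pq : Fin n × Fin n =>
    pq.1 < pq.2 ∧ ε pq.1 = false ∧ ε pq.2 = true with hSB
  have hds : dstat (fun u => ε (s u)) = SA.card := rfl
  have hds2 : dstat ε = SB.card := rfl
  have hinj : Function.Injective (fun pq : Fin n × Fin n => (s pq.1, s pq.2)) := by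
    intro x y hxy
    simp only [Prod.mk.injEq] at hxy
    exact Prod.ext (s.injective hxy.1) (s.injective hxy.2)
  have key : SA.erase (a, b) = (SB.erase (a, b)).image (fun pq => (s pq.1, s pq.2)) := by
    ext pq
    simp only [Finset.mem_erase, Finset.mem_image, hSA, hSB, Finset.mem_filter,
      Finset.mem_univ, true_and]
    constructor
    · rintro ⟨hne, hlt, h1, h2⟩
      refine ⟨(s pq.1, s pq.2), ⟨?_, ?_, by simpa [hss], by simpa [hss]⟩, by simp [hss]⟩
      · intro hc
        rw [Prod.mk.injEq] at hc
        have e1 : pq.1 = b := by rw [← hss pq.1, hc.1, hsa]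
        have e2 : pq.2 = a := by rw [← hss pq.2, hc.2, hsb]
        rw [e1, e2] at hlt
        exact absurd hlt (not_lt.mpr haltb.le)
      · refine swap_lt hab hlt ?_
        rintro ⟨e1, e2⟩
        exact hne (by rw [Prod.ext_iff]; exact ⟨e1, e2⟩)
    · rintro ⟨x, ⟨hne, hlt, h1, h2⟩, hx⟩
      subst hx
      refine ⟨?_, swap_lt hab hlt (fun ⟨e1, e2⟩ => hne (by rw [Prod.ext_iff]; exact ⟨e1, e2⟩)),
        by simpa [hss], by simpa [hss]⟩
      intro hc
      rw [Prod.mk.injEq] at hc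
      have e1 : x.1 = b := by rw [← hss x.1, hc.1, hsa]
      have e2 : x.2 = a := by rw [← hss x.2, hc.2, hsb]
      rw [e1, e2] at hlt
      exact absurd hlt (not_lt.mpr haltb.le)
  have hcard : (SA.erase (a, b)).card = (SB.erase (a, b)).card := by
    rw [key, Finset.card_image_of_injective _ hinj]
  have hmemA : (a, b) ∈ SA ↔ (ε a = true ∧ ε b = false) := by
    simp only [hSA, Finset.mem_filter, Finset.mem_univ, true_and, hsa, hsb]
    constructor
    · rintro ⟨_, h1, h2⟩; exact ⟨h2, h1⟩
    · rintro ⟨h1, h2⟩; exact ⟨haltb, h2, h1⟩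
  have hmemB : (a, b) ∈ SB ↔ (ε a = false ∧ ε b = true) := by
    simp only [hSB, Finset.mem_filter, Finset.mem_univ, true_and]
    constructor
    · rintro ⟨_, h1, h2⟩; exact ⟨h1, h2⟩
    · rintro ⟨h1, h2⟩; exact ⟨haltb, h1, h2⟩
  have eA : SA.card = (SA.erase (a, b)).card + (if ε a = true ∧ ε b = false then 1 else 0) := by
    by_cases hm : (a, b) ∈ SA
    · rw [if_pos (hmemA.mp hm), Finset.card_erase_of_mem hm]
      have := Finset.card_pos.mpr ⟨_, hm⟩
      omega
    · rw [if_neg (fun hc => hm (hmemA.mpr hc)), Finset.erase_eq_of_notMem hm]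
      omega
  have eB : SB.card = (SB.erase (a, b)).card + (if ε a = false ∧ ε b = true then 1 else 0) := by
    by_cases hm : (a, b) ∈ SB
    · rw [if_pos (hmemB.mp hm), Finset.card_erase_of_mem hm]
      have := Finset.card_pos.mpr ⟨_, hm⟩
      omega
    · rw [if_neg (fun hc => hm (hmemB.mpr hc)), Finset.erase_eq_of_notMem hm]
      omega
  rw [hds, hds2, eA, eB, hcard]
  ring

lemma dstat_goodstep {n : ℕ} {ε : Fin n → Bool} {m : ℕ} (hg : goodstep ε m) :
    dstat (actE (sperm n m) ε) = dstat ε + 1 := by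
  obtain ⟨h, h1, h2⟩ := hg
  have := dstat_core ε m h
  rw [if_neg (by simp [h1]), if_pos ⟨h1, h2⟩] at this
  omega

lemma dstat_not_goodstep {n : ℕ} {ε : Fin n → Bool} {m : ℕ} (hg : ¬goodstep ε m) :
    dstat (actE (sperm n m) ε) ≤ dstat ε := by
  by_cases h : 1 ≤ m ∧ m < n
  · have hcore := dstat_core ε m h
    have hnp : ¬(ε ⟨m - 1, by omega⟩ = true ∧ ε ⟨m, h.2⟩ = false) := fun hc => hg ⟨h, hc⟩
    rw [if_neg hnp] at hcore
    split_ifs at hcore <;> omega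
  · have h1 : sperm n m = 1 := by simp [sperm, h]
    have h2 : actE (1 : Equiv.Perm (Fin n)) ε = ε := funext fun u => by simp [actE]
    rw [h1, h2]

lemma len_one {n : ℕ} : len (1 : Equiv.Perm (Fin n)) = 0 := by
  rw [len, Finset.card_eq_zero]
  ext pq
  simp only [Finset.mem_filter, Finset.mem_univ, true_and, Finset.notMem_empty, iff_false]
  rintro ⟨h1, h2⟩
  simp only [Equiv.Perm.one_apply] at h2
  exact absurd h1 (not_lt.mpr h2.le)

lemma len_sperm_mul_le {n : ℕ} (m : ℕ) (w : Equiv.Perm (Fin n)) :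
    len (sperm n m * w) ≤ len w + 1 := by
  by_cases h : 1 ≤ m ∧ m < n
  · set a : Fin n := ⟨m - 1, by omega⟩
    set b : Fin n := ⟨m, h.2⟩
    have hab : (a : ℕ) + 1 = (b : ℕ) := by simp [a, b]; omega
    have hsp : sperm n m = Equiv.swap a b := by rw [sperm, dif_pos h]
    have hsub : (Finset.univ.filter fun pq : Fin n × Fin n =>
        pq.1 < pq.2 ∧ (sperm n m * w) pq.2 < (sperm n m * w) pq.1) ⊆
        insert (w⁻¹ a, w⁻¹ b) (Finset.univ.filter fun pq : Fin n × Fin n =>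
          pq.1 < pq.2 ∧ w pq.2 < w pq.1) := by
      intro pq hpq
      simp only [Finset.mem_filter, Finset.mem_univ, true_and, hsp,
        Equiv.Perm.mul_apply] at hpq
      obtain ⟨hlt, hswap⟩ := hpq
      rw [Finset.mem_insert]
      by_cases hc : w pq.1 = a ∧ w pq.2 = b
      · left
        rw [Prod.ext_iff]
        constructor
        · simp [← hc.1]
        · simp [← hc.2]
      · right
        simp only [Finset.mem_filter, Finset.mem_univ, true_and]
        refine ⟨hlt, ?_⟩
        by_contra hcon
        push_neg at hcon
        have hne : w pq.1 ≠ w pq.2 := fun hc => absurd (w.injective hc) (ne_of_lt hlt)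
        have : w pq.1 < w pq.2 := lt_of_le_of_ne hcon hne
        exact absurd (swap_lt hab this hc) (not_lt.mpr hswap.le)
    calc len (sperm n m * w) ≤ (insert (w⁻¹ a, w⁻¹ b) (Finset.univ.filter
          fun pq : Fin n × Fin n => pq.1 < pq.2 ∧ w pq.2 < w pq.1)).card :=
        Finset.card_le_card hsub
      _ ≤ len w + 1 := Finset.card_insert_le _ _
  · have : sperm n m = 1 := by simp [sperm, h]
    simp [this]

lemma len_prod_le {n : ℕ} (l : List ℕ) : len ((l.map (sperm n)).prod) ≤ l.length := by
  induction l with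
  | nil => simp [len_one]
  | cons m l ih =>
    rw [List.map_cons, List.prod_cons, List.length_cons]
    calc len (sperm n m * (l.map (sperm n)).prod) ≤ len ((l.map (sperm n)).prod) + 1 :=
        len_sperm_mul_le m _
      _ ≤ l.length + 1 := by omega


/-! ### Action by words -/

def applyL (n : ℕ) (l : List ℕ) (ε : Fin n → Bool) : Fin n → Bool :=
  l.foldr (fun m e => actE (sperm n m) e) ε

lemma applyL_nil (n : ℕ) (ε : Fin n → Bool) : applyL n [] ε = ε := rfl

lemma applyL_cons (n m : ℕ) (l : List ℕ) (ε : Fin n → Bool) :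
    applyL n (m :: l) ε = actE (sperm n m) (applyL n l ε) := rfl

lemma applyL_append (n : ℕ) (l1 l2 : List ℕ) (ε : Fin n → Bool) :
    applyL n (l1 ++ l2) ε = applyL n l1 (applyL n l2 ε) := by
  induction l1 with
  | nil => rfl
  | cons m l1 ih => rw [List.cons_append, applyL_cons, applyL_cons, ih]

lemma actE_one {n : ℕ} (ε : Fin n → Bool) : actE (1 : Equiv.Perm (Fin n)) ε = ε :=
  funext fun u => by simp [actE]

lemma actE_mul {n : ℕ} (u w : Equiv.Perm (Fin n)) (ε : Fin n → Bool) :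
    actE (u * w) ε = actE u (actE w ε) :=
  funext fun t => by simp [actE]

lemma applyL_eq_actE (n : ℕ) (l : List ℕ) (ε : Fin n → Bool) :
    applyL n l ε = actE ((l.map (sperm n)).prod) ε := by
  induction l with
  | nil => rw [applyL_nil, List.map_nil, List.prod_nil, actE_one]
  | cons m l ih => rw [applyL_cons, ih, List.map_cons, List.prod_cons, actE_mul]

def allgood (n : ℕ) : List ℕ → (Fin n → Bool) → Prop
  | [], _ => True
  | m :: l, ε => allgood n l ε ∧ goodstep (applyL n l ε) m

lemma dstat_applyL_le (n : ℕ) (l : List ℕ) (ε : Fin n → Bool) :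
    dstat (applyL n l ε) ≤ dstat ε + l.length := by
  induction l with
  | nil => simp [applyL_nil]
  | cons m l ih =>
    rw [applyL_cons, List.length_cons]
    by_cases hg : goodstep (applyL n l ε) m
    · rw [dstat_goodstep hg]; omega
    · have := dstat_not_goodstep hg; omega

lemma dstat_applyL_allgood (n : ℕ) (l : List ℕ) (ε : Fin n → Bool) (h : allgood n l ε) :
    dstat (applyL n l ε) = dstat ε + l.length := by
  induction l with
  | nil => simp [applyL_nil]
  | cons m l ih =>
    obtain ⟨h1, h2⟩ := h
    rw [applyL_cons, List.length_cons, dstat_goodstep h2, ih h1]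
    omega

lemma allgood_of_dstat (n : ℕ) (l : List ℕ) (ε : Fin n → Bool)
    (h : dstat (applyL n l ε) = dstat ε + l.length) : allgood n l ε := by
  induction l with
  | nil => trivial
  | cons m l ih =>
    rw [applyL_cons, List.length_cons] at h
    have hle := dstat_applyL_le n l ε
    by_cases hg : goodstep (applyL n l ε) m
    · have h2 := dstat_goodstep (ε := applyL n l ε) hg
      exact ⟨ih (by omega), hg⟩
    · have h2 := dstat_not_goodstep (ε := applyL n l ε) hg
      exfalso; omega

lemma allgood_append (n : ℕ) (l1 l2 : List ℕ) (ε : Fin n → Bool) :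
    allgood n (l1 ++ l2) ε ↔ allgood n l1 (applyL n l2 ε) ∧ allgood n l2 ε := by
  induction l1 with
  | nil => simp [allgood]
  | cons m l1 ih =>
    simp only [List.cons_append, allgood, ih, applyL_append, List.append_eq]
    tauto


/-! ### The canonical word is reduced -/

lemma lam_mono (n k : ℕ) (lam : ℕ → ℕ) (hY : IsYoung n k lam) :
    ∀ s i, 1 ≤ s → s ≤ i → lam i ≤ lam s := by
  intro s i hs hsi
  induction i with
  | zero => exact absurd hsi (by omega)
  | succ i ih =>
    by_cases hcase : s = i + 1
    · subst hcase; exact le_rfl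
    · exact le_trans (hY.1 i (by omega)) (ih (by omega))

def Eps (n k : ℕ) (lam : ℕ → ℕ) (i c : ℕ) : Fin n → Bool := fun t =>
  decide ((t : ℕ) + 1 + i ≤ k ∨ (t : ℕ) + 1 + i = k + 1 + c ∨
    ∃ s, 1 ≤ s ∧ s < i ∧ (t : ℕ) + 1 + s = k + 1 + lam s)

lemma Eps_true_iff (n k : ℕ) (lam : ℕ → ℕ) (i c : ℕ) (t : Fin n) :
    Eps n k lam i c t = true ↔ ((t : ℕ) + 1 + i ≤ k ∨ (t : ℕ) + 1 + i = k + 1 + c ∨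
      ∃ s, 1 ≤ s ∧ s < i ∧ (t : ℕ) + 1 + s = k + 1 + lam s) := by
  simp [Eps]

lemma Eps_false_iff (n k : ℕ) (lam : ℕ → ℕ) (i c : ℕ) (t : Fin n) :
    Eps n k lam i c t = false ↔ ¬((t : ℕ) + 1 + i ≤ k ∨ (t : ℕ) + 1 + i = k + 1 + c ∨
      ∃ s, 1 ≤ s ∧ s < i ∧ (t : ℕ) + 1 + s = k + 1 + lam s) := by
  simp [Eps]

lemma Eps_one_zero (n k : ℕ) (lam : ℕ → ℕ) : Eps n k lam 1 0 = oneSeq n k := by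
  funext t
  rw [Eps, oneSeq, decide_eq_decide]
  constructor
  · rintro (h | h | ⟨s, h1, h2, _⟩) <;> omega
  · intro h
    rcases Nat.lt_or_ge ((t : ℕ) + 1) k with h2 | h2
    · left; omega
    · right; left; omega

lemma Eps_shift (n k : ℕ) (lam : ℕ → ℕ) (i : ℕ) (hi : 1 ≤ i) :
    Eps n k lam i (lam i) = Eps n k lam (i + 1) 0 := by
  funext t
  rw [Eps, Eps, decide_eq_decide]
  constructor
  · rintro (h | h | ⟨s, h1, h2, h3⟩)
    · rcases Nat.lt_or_ge ((t : ℕ) + 1 + i) k with h2 | h2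
      · left; omega
      · right; left; omega
    · right; right; exact ⟨i, hi, by omega, by omega⟩
    · right; right; exact ⟨s, h1, by omega, h3⟩
  · rintro (h | h | ⟨s, h1, h2, h3⟩)
    · left; omega
    · left; omega
    · by_cases hsi : s = i
      · subst hsi; right; left; omega
      · right; right; exact ⟨s, h1, by omega, h3⟩

lemma Eps_step (n k : ℕ) (lam : ℕ → ℕ) (hY : IsYoung n k lam) (hkn : k < n)
    (i c : ℕ) (hi1 : 1 ≤ i) (hik : i ≤ k) (hc : c < lam i) :
    goodstep (Eps n k lam i c) (k + (c + 1) - i) ∧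
      actE (sperm n (k + (c + 1) - i)) (Eps n k lam i c) = Eps n k lam i (c + 1) := by
  have hlami : lam i ≤ n - k := le_trans (lam_mono n k lam hY 1 i le_rfl hi1) hY.2.1
  set m := k + (c + 1) - i with hm
  have hm1 : 1 ≤ m := by omega
  have hmn : m < n := by omega
  have hmi : m + i = k + c + 1 := by omega
  have hval_a : ∀ hpf : m - 1 < n, Eps n k lam i c ⟨m - 1, hpf⟩ = true := by
    intro hpf
    rw [Eps_true_iff]
    right; left
    show m - 1 + 1 + i = k + 1 + c
    omega
  have hval_b : ∀ hpf : m < n, Eps n k lam i c ⟨m, hpf⟩ = false := by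
    intro hpf
    rw [Eps_false_iff]
    rintro (h | h | ⟨s, h1, h2, h3⟩)
    · revert h; show ¬(m + 1 + i ≤ k); omega
    · revert h; show ¬(m + 1 + i = k + 1 + c); omega
    · have hmono := lam_mono n k lam hY s i h1 (by omega)
      revert h3; show ¬(m + 1 + s = k + 1 + lam s); omega
  refine ⟨⟨⟨hm1, hmn⟩, hval_a _, hval_b _⟩, ?_⟩
  rw [actE_eq m ⟨hm1, hmn⟩]
  funext u
  by_cases hua : u = (⟨m - 1, by omega⟩ : Fin n)
  · subst hua
    rw [Equiv.swap_apply_left, hval_b]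
    symm
    rw [Eps_false_iff]
    rintro (h | h | ⟨s, h1, h2, h3⟩)
    · revert h; show ¬(m - 1 + 1 + i ≤ k); omega
    · revert h; show ¬(m - 1 + 1 + i = k + 1 + (c + 1)); omega
    · have hmono := lam_mono n k lam hY s i h1 (by omega)
      revert h3; show ¬(m - 1 + 1 + s = k + 1 + lam s); omega
  · by_cases hub : u = (⟨m, hmn⟩ : Fin n)
    · subst hub
      rw [Equiv.swap_apply_right, hval_a]
      symm
      rw [Eps_true_iff]
      right; left
      show m + 1 + i = k + 1 + (c + 1)
      omega
    · rw [Equiv.swap_apply_of_ne_of_ne hua hub]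
      have hne1 : (u : ℕ) ≠ m - 1 := fun hc' => hua (by rw [Fin.ext_iff]; exact hc')
      have hne2 : (u : ℕ) ≠ m := fun hc' => hub (by rw [Fin.ext_iff]; exact hc')
      rw [Eps, Eps, decide_eq_decide]
      constructor
      · rintro (h | h | H)
        · left; exact h
        · exfalso; omega
        · right; right; exact H
      · rintro (h | h | H)
        · left; exact h
        · exfalso; omega
        · right; right; exact H

def rowL (k i c : ℕ) : List ℕ := (List.range c).reverse.map fun j' => k + (j' + 1) - i

lemma rowL_succ (k i c : ℕ) : rowL k i (c + 1) = (k + (c + 1) - i) :: rowL k i c := by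
  rw [rowL, rowL, List.range_succ, List.reverse_append, List.reverse_singleton,
    List.singleton_append, List.map_cons]

lemma row_all (n k : ℕ) (lam : ℕ → ℕ) (hY : IsYoung n k lam) (hkn : k < n)
    (i : ℕ) (hi1 : 1 ≤ i) (hik : i ≤ k) :
    ∀ c, c ≤ lam i →
      applyL n (rowL k i c) (Eps n k lam i 0) = Eps n k lam i c ∧
        allgood n (rowL k i c) (Eps n k lam i 0) := by
  intro c
  induction c with
  | zero => intro _; exact ⟨rfl, trivial⟩
  | succ c ih =>
    intro hc
    obtain ⟨ih1, ih2⟩ := ih (by omega)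
    obtain ⟨hgood, hstep⟩ := Eps_step n k lam hY hkn i c hi1 hik (by omega)
    rw [rowL_succ]
    constructor
    · rw [applyL_cons, ih1, hstep]
    · exact ⟨ih2, by rw [ih1]; exact hgood⟩

def rowsCat (k : ℕ) (lam : ℕ → ℕ) : ℕ → List ℕ
  | 0 => []
  | i + 1 => rowL k (i + 1) (lam (i + 1)) ++ rowsCat k lam i

lemma rows_all (n k : ℕ) (lam : ℕ → ℕ) (hY : IsYoung n k lam) (hkn : k < n) :
    ∀ i, i ≤ k →
      applyL n (rowsCat k lam i) (oneSeq n k) = Eps n k lam (i + 1) 0 ∧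
        allgood n (rowsCat k lam i) (oneSeq n k) := by
  intro i
  induction i with
  | zero =>
    intro _
    exact ⟨by rw [rowsCat, applyL_nil, Eps_one_zero], trivial⟩
  | succ i ih =>
    intro hik
    obtain ⟨ih1, ih2⟩ := ih (by omega)
    obtain ⟨hrow1, hrow2⟩ := row_all n k lam hY hkn (i + 1) (by omega) hik (lam (i + 1)) le_rfl
    rw [rowsCat]
    constructor
    · rw [applyL_append, ih1, hrow1, Eps_shift n k lam (i + 1) (by omega)]
    · rw [allgood_append]
      exact ⟨by rw [ih1]; exact hrow2, ih2⟩

lemma wword_eq_rowsCat (k : ℕ) (lam : ℕ → ℕ) : wword k lam = rowsCat k lam k := by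
  suffices h : ∀ j, (((List.range j).reverse.map fun i' =>
      (List.range (lam (i' + 1))).reverse.map fun j' => (i' + 1, j' + 1)).flatten).map
        (fun b => k + b.2 - b.1) = rowsCat k lam j by
    exact h k
  intro j
  induction j with
  | zero => rfl
  | succ j ih =>
    rw [List.range_succ, List.reverse_append, List.reverse_singleton, List.singleton_append,
      List.map_cons, List.flatten_cons, List.map_append, ih, rowsCat]
    congr 1
    rw [List.map_map, rowL]
    rfl


lemma v_ne_zero : (v : F) ≠ 0 := RatFunc.X_ne_zero

lemma xv_in {n : ℕ} (p : ℕ) (h : 1 ≤ p ∧ p ≤ n) : xv n p = MvPolynomial.X ⟨p - 1, by omega⟩ :=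
  dif_pos h

lemma swapf_eq {n : ℕ} (m : ℕ) (h : 1 ≤ m ∧ m < n) (f : MvPolynomial (Fin n) F) :
    swapf n m f = MvPolynomial.rename (Equiv.swap ⟨m - 1, by omega⟩ ⟨m, h.2⟩) f := dif_pos h

lemma swapf_mul {n : ℕ} (m : ℕ) (h : 1 ≤ m ∧ m < n) (f g : MvPolynomial (Fin n) F) :
    swapf n m (f * g) = swapf n m f * swapf n m g := by
  rw [swapf_eq m h, swapf_eq m h, swapf_eq m h, map_mul]

lemma swapf_sub {n : ℕ} (m : ℕ) (h : 1 ≤ m ∧ m < n) (f g : MvPolynomial (Fin n) F) :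
    swapf n m (f - g) = swapf n m f - swapf n m g := by
  rw [swapf_eq m h, swapf_eq m h, swapf_eq m h, map_sub]

lemma swapf_C {n : ℕ} (m : ℕ) (h : 1 ≤ m ∧ m < n) (c : F) :
    swapf n m (MvPolynomial.C c) = MvPolynomial.C c := by
  rw [swapf_eq m h, MvPolynomial.rename_C]

lemma swapf_xv_ne {n : ℕ} (m t : ℕ) (h : 1 ≤ m ∧ m < n) (ht1 : t ≠ m) (ht2 : t ≠ m + 1) :
    swapf n m (xv n t) = xv n t := by
  rw [swapf_eq m h, xv]
  split_ifs with h2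
  · rw [MvPolynomial.rename_X, Equiv.swap_apply_of_ne_of_ne
      (by intro hc; rw [Fin.ext_iff] at hc; simp at hc; omega)
      (by intro hc; rw [Fin.ext_iff] at hc; simp at hc; omega)]
  · rw [map_zero]

lemma swapf_xv_left {n : ℕ} (m : ℕ) (h : 1 ≤ m ∧ m < n) :
    swapf n m (xv n m) = xv n (m + 1) := by
  rw [swapf_eq m h, xv_in m ⟨h.1, by omega⟩, MvPolynomial.rename_X, Equiv.swap_apply_left,
    xv_in (m + 1) ⟨by omega, by omega⟩]
  congr 1

lemma swapf_xv_right {n : ℕ} (m : ℕ) (h : 1 ≤ m ∧ m < n) :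
    swapf n m (xv n (m + 1)) = xv n m := by
  have : (⟨m + 1 - 1, by omega⟩ : Fin n) = ⟨m, h.2⟩ := by simp
  rw [swapf_eq m h, xv_in (m + 1) ⟨by omega, by omega⟩, this, MvPolynomial.rename_X,
    Equiv.swap_apply_right, xv_in m ⟨h.1, by omega⟩]

lemma swapf_list_prod {n : ℕ} (m : ℕ) (h : 1 ≤ m ∧ m < n) {α : Type*} (L : List α)
    (f : α → MvPolynomial (Fin n) F) (hf : ∀ x ∈ L, swapf n m (f x) = f x) :
    swapf n m ((L.map f).prod) = (L.map f).prod := by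
  induction L with
  | nil =>
    rw [List.map_nil, List.prod_nil, swapf_eq m h, map_one]
  | cons a L ih =>
    rw [List.map_cons, List.prod_cons, swapf_mul m h, hf a List.mem_cons_self,
      ih fun x hx => hf x (List.mem_cons_of_mem _ hx)]

lemma xv_sub_ne {n : ℕ} (m : ℕ) (h : 1 ≤ m ∧ m < n) : xv n m - xv n (m + 1) ≠ 0 := by
  rw [xv_in m ⟨h.1, by omega⟩, xv_in (m + 1) ⟨by omega, by omega⟩]
  intro h0
  have := MvPolynomial.X_injective (R := F) (sub_eq_zero.mp h0)
  rw [Fin.ext_iff] at this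
  simp at this
  omega

lemma ddiff_eq {n : ℕ} (m : ℕ) (h : 1 ≤ m ∧ m < n) (f g : MvPolynomial (Fin n) F)
    (hfg : f - swapf n m f = (xv n m - xv n (m + 1)) * g) : ddiff n m f = g := by
  have hex : ∃ g', f - swapf n m f = (xv n m - xv n (m + 1)) * g' := ⟨g, hfg⟩
  rw [ddiff, dif_pos hex]
  have hspec := hex.choose_spec
  exact mul_left_cancel₀ (xv_sub_ne m h) (by rw [← hspec, hfg])

lemma nabla_mul_inv {n : ℕ} (m : ℕ) (h : 1 ≤ m ∧ m < n) (G f g : MvPolynomial (Fin n) F)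
    (hG : swapf n m G = G)
    (hfg : f - swapf n m f = (xv n m - xv n (m + 1)) * g) :
    nabla n m (G * f) =
      G * ((MvPolynomial.C v * xv n (m + 1) - MvPolynomial.C v⁻¹ * xv n m) * g) := by
  have hdd : ddiff n m (G * f) = G * g := by
    apply ddiff_eq m h
    rw [swapf_mul m h, hG]
    calc G * f - G * swapf n m f = G * (f - swapf n m f) := by ring
      _ = G * ((xv n m - xv n (m + 1)) * g) := by rw [hfg]
      _ = (xv n m - xv n (m + 1)) * (G * g) := by ring
  rw [nabla, hdd]
  ring


/-! ### The key step lemma -/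

def Wf (n : ℕ) (pq : ℕ × ℕ) : MvPolynomial (Fin n) F :=
  xv n pq.1 - MvPolynomial.C (v ^ (pq.2 + 1 - pq.1)) * xv n pq.2

lemma Qpoly_eq (n : ℕ) (ε : Fin n → Bool) :
    Qpoly n ε = MvPolynomial.C (v⁻¹ ^ dstat ε) *
      ((matchAux (List.ofFn ε) 1 []).1.map (Wf n)).prod *
      ((matchAux (List.ofFn ε) 1 []).2.map (xv n)).prod := rfl

lemma swapf_Wf {n : ℕ} (m : ℕ) (hm : 1 ≤ m ∧ m < n) (pq : ℕ × ℕ)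
    (ha1 : pq.1 ≠ m) (ha2 : pq.1 ≠ m + 1) (hb1 : pq.2 ≠ m) (hb2 : pq.2 ≠ m + 1) :
    swapf n m (Wf n pq) = Wf n pq := by
  rw [Wf, swapf_sub m hm, swapf_mul m hm, swapf_C m hm, swapf_xv_ne m pq.1 hm ha1 ha2,
    swapf_xv_ne m pq.2 hm hb1 hb2]

lemma C_inv_mul_C_sq (n : ℕ) :
    (MvPolynomial.C v⁻¹ : MvPolynomial (Fin n) F) * MvPolynomial.C (v ^ 2) =
      MvPolynomial.C v := by
  rw [← map_mul]
  congr 1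
  rw [sq, ← mul_assoc, inv_mul_cancel₀ v_ne_zero, one_mul]

lemma Qpoly_step_aux (n m : ℕ) (hm : 1 ≤ m ∧ m < n) (G h h' g : MvPolynomial (Fin n) F)
    (hG : swapf n m G = G)
    (hfg : h - swapf n m h = (xv n m - xv n (m + 1)) * g)
    (hfin : (MvPolynomial.C v * xv n (m + 1) - MvPolynomial.C v⁻¹ * xv n m) * g =
      MvPolynomial.C v⁻¹ * h') :
    nabla n m (G * h) = MvPolynomial.C v⁻¹ * (G * h') := by
  rw [nabla_mul_inv m hm G h g hG hfg, hfin]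
  ring

lemma Qpoly_step {n : ℕ} {ε : Fin n → Bool} {m : ℕ} (hm1 : 1 ≤ m) (hm2 : m < n)
    (h1 : ε ⟨m - 1, by omega⟩ = true) (h2 : ε ⟨m, hm2⟩ = false) :
    nabla n m (Qpoly n ε) = Qpoly n (actE (sperm n m) ε) := by
  have hm : 1 ≤ m ∧ m < n := ⟨hm1, hm2⟩
  set ε' := actE (sperm n m) ε with hε'
  have hd : dstat ε' = dstat ε + 1 := dstat_goodstep ⟨⟨hm1, hm2⟩, h1, h2⟩
  set a : Fin n := ⟨m - 1, by omega⟩ with ha_def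
  set b : Fin n := ⟨m, hm2⟩ with hb_def
  have ha : (a : ℕ) = m - 1 := rfl
  have hb : (b : ℕ) = m := rfl
  have h1' : ε a = true := h1
  have h2' : ε b = false := h2
  have hεval : ∀ u : Fin n, ε' u = ε (Equiv.swap a b u) := by
    intro u
    simp only [hε', actE_eq m ⟨hm1, hm2⟩]
    rfl
  have hva' : ε' a = false := by rw [hεval a, Equiv.swap_apply_left]; exact h2'
  have hvb' : ε' b = true := by rw [hεval b, Equiv.swap_apply_right]; exact h1'
  have hvother : ∀ u, u ≠ a → u ≠ b → ε' u = ε u := fun u hua hub => by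
    rw [hεval u, Equiv.swap_apply_of_ne_of_ne hua hub]
  set l1 := (List.ofFn ε).take (m - 1) with hl1
  set l2 := (List.ofFn ε).drop (m + 1) with hl2
  have hl1len : l1.length = m - 1 := by rw [hl1, List.length_take]; simp; omega
  have hl2len : l2.length = n - (m + 1) := by rw [hl2, List.length_drop]; simp
  have gensplit : ∀ δ : Fin n → Bool, List.ofFn δ =
      (List.ofFn δ).take (m - 1) ++ δ a :: δ b :: (List.ofFn δ).drop (m + 1) := by
    intro δ
    conv_lhs => rw [← List.take_append_drop (m - 1) (List.ofFn δ)]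
    congr 1
    rw [List.drop_eq_getElem_cons (by simp; omega), List.getElem_ofFn]
    congr 1
    rw [show m - 1 + 1 = m from by omega, List.drop_eq_getElem_cons (by simp; omega),
      List.getElem_ofFn]
  have hsplitε : List.ofFn ε = l1 ++ true :: false :: l2 := by
    rw [gensplit ε, h1', h2', hl1, hl2]
  have htake : (List.ofFn ε').take (m - 1) = l1 := by
    rw [hl1]
    apply List.ext_getElem
    · simp
    · intro i hi1 hi2
      have hi : i < m - 1 := by simp [List.length_take] at hi1; omega
      simp only [List.getElem_take, List.getElem_ofFn]
      apply hvother
      · intro hc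
        have hval := congrArg Fin.val hc
        simp only [ha] at hval
        omega
      · intro hc
        have hval := congrArg Fin.val hc
        simp only [hb] at hval
        omega
  have hdrop : (List.ofFn ε').drop (m + 1) = l2 := by
    rw [hl2]
    apply List.ext_getElem
    · simp
    · intro i hi1 hi2
      simp only [List.getElem_drop, List.getElem_ofFn]
      apply hvother
      · intro hc
        have hval := congrArg Fin.val hc
        simp only [ha] at hval
        omega
      · intro hc
        have hval := congrArg Fin.val hc
        simp only [hb] at hval
        omega
  have hsplitε' : List.ofFn ε' = l1 ++ false :: true :: l2 := by
    rw [gensplit ε', hva', hvb', htake, hdrop]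
  obtain ⟨P0, S, hPS⟩ : ∃ P0 S, matchAux l1 1 [] = (P0, S) := ⟨_, _, rfl⟩
  have hmem1 := matchAux_mem l1 1 []
  rw [hPS] at hmem1
  have hposm : 1 + l1.length = m := by rw [hl1len]; omega
  have hstep1 : matchAux (List.ofFn ε) 1 [] =
      (P0 ++ (matchAux (true :: false :: l2) m S).1,
        (matchAux (true :: false :: l2) m S).2) := by
    rw [hsplitε, matchAux_append, hPS, hposm]
  have hstep1' : matchAux (List.ofFn ε') 1 [] =
      (P0 ++ (matchAux (false :: true :: l2) m S).1,
        (matchAux (false :: true :: l2) m S).2) := by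
    rw [hsplitε', matchAux_append]
    have hl1' : matchAux l1 1 [] = (P0, S) := hPS
    rw [hl1', hposm]
  have hP0b : ∀ pq ∈ P0, (pq.1 ≠ m ∧ pq.1 ≠ m + 1) ∧ (pq.2 ≠ m ∧ pq.2 ≠ m + 1) := by
    intro pq hpq
    obtain ⟨hf, hs1, hs2⟩ := hmem1.1 pq hpq
    rw [hl1len] at hf hs2
    rcases hf with hf | hf
    · exact absurd hf List.not_mem_nil
    · exact ⟨⟨by omega, by omega⟩, by omega, by omega⟩
  have hP0inv : ∀ pq ∈ P0, swapf n m (Wf n pq) = Wf n pq := by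
    intro pq hpq
    obtain ⟨⟨u1, u2⟩, u3, u4⟩ := hP0b pq hpq
    exact swapf_Wf m hm pq u1 u2 u3 u4
  have hSb : ∀ x ∈ S, 1 ≤ x ∧ x < m := by
    intro x hx
    have := hmem1.2 x hx
    rw [hl1len] at this
    rcases this with hf | hf
    · exact absurd hf List.not_mem_nil
    · omega
  -- the four cases
  rcases S with _ | ⟨p, S'⟩
  · -- empty stack before position m
    have h22 : m + 1 + 1 = m + 2 := by omega
    have hA : matchAux (true :: false :: l2) m [] = matchAux l2 (m + 2) [m + 1] := by
      rw [matchAux_true_nil, matchAux_false, h22]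
    have hB : matchAux (false :: true :: l2) m [] =
        ((m, m + 1) :: (matchAux l2 (m + 2) []).1, (matchAux l2 (m + 2) []).2) := by
      rw [matchAux_false, matchAux_true_cons, h22]
    have hmemA := matchAux_mem l2 (m + 2) [m + 1]
    have hmemB := matchAux_mem l2 (m + 2) []
    have hBpairs : ∀ pq ∈ (matchAux l2 (m + 2) []).1,
        (pq.1 ≠ m ∧ pq.1 ≠ m + 1) ∧ (pq.2 ≠ m ∧ pq.2 ≠ m + 1) := by
      intro pq hpq
      obtain ⟨hf, hs1, hs2⟩ := hmemB.1 pq hpq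
      rcases hf with hf | hf
      · exact absurd hf List.not_mem_nil
      · exact ⟨⟨by omega, by omega⟩, by omega, by omega⟩
    have hBleft : ∀ x ∈ (matchAux l2 (m + 2) []).2, x ≠ m ∧ x ≠ m + 1 := by
      intro x hx
      rcases hmemB.2 x hx with hf | hf
      · exact absurd hf List.not_mem_nil
      · omega
    rcases matchAux_bot l2 (m + 2) [] (m + 1) with
      ⟨X, Y, q, hXa, hXb, hLL⟩ | ⟨hAB, hLB⟩
    · -- case (iii)
      simp only [List.nil_append] at hXa hXb hLL
      have hq : m + 2 ≤ q ∧ q ≤ n := by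
        have hmem : (m + 1, q) ∈ (matchAux l2 (m + 2) [m + 1]).1 := by
          rw [hXa]; exact List.mem_append_right _ List.mem_cons_self
        have := (hmemA.1 _ hmem).2
        rw [hl2len] at this
        simp only at this
        omega
      have hMε : matchAux (List.ofFn ε) 1 [] =
          (P0 ++ (X ++ (m + 1, q) :: Y), (matchAux l2 (m + 2) []).2) := by
        rw [hstep1, hA, hXa, hLL]
      have hMε' : matchAux (List.ofFn ε') 1 [] =
          (P0 ++ (m, m + 1) :: (X ++ Y), (matchAux l2 (m + 2) []).2) := by
        rw [hstep1', hB, hXb]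
      set L := (matchAux l2 (m + 2) []).2 with hL
      set G := MvPolynomial.C (v⁻¹ ^ dstat ε) * (((P0 ++ (X ++ Y)).map (Wf n)).prod *
        (L.map (xv n)).prod) with hG
      have hXYsub : ∀ pq ∈ P0 ++ (X ++ Y), swapf n m (Wf n pq) = Wf n pq := by
        intro pq hpq
        rcases List.mem_append.mp hpq with hf | hf
        · exact hP0inv pq hf
        · have : pq ∈ (matchAux l2 (m + 2) []).1 := by
            rw [hXb]; exact hf
          obtain ⟨⟨u1, u2⟩, u3, u4⟩ := hBpairs pq this
          exact swapf_Wf m hm pq u1 u2 u3 u4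
      have hLinv : ∀ x ∈ L, swapf n m (xv n x) = xv n x := by
        intro x hx
        obtain ⟨u1, u2⟩ := hBleft x hx
        exact swapf_xv_ne m x hm u1 u2
      have hGinv : swapf n m G = G := by
        rw [hG, swapf_mul m hm, swapf_C m hm, swapf_mul m hm,
          swapf_list_prod m hm _ _ hXYsub, swapf_list_prod m hm _ _ hLinv]
      have hQ : Qpoly n ε = G * Wf n (m + 1, q) := by
        rw [Qpoly_eq, hMε, hG]
        simp only [List.map_append, List.map_cons, List.prod_append, List.prod_cons]
        ring
      have hQ' : Qpoly n ε' = MvPolynomial.C v⁻¹ * (G * Wf n (m, m + 1)) := by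
        rw [Qpoly_eq, hMε', hd, pow_succ, map_mul, hG]
        simp only [List.map_append, List.map_cons, List.prod_append, List.prod_cons]
        ring
      have hfg : Wf n (m + 1, q) - swapf n m (Wf n (m + 1, q)) =
          (xv n m - xv n (m + 1)) * (-1) := by
        have hsw : swapf n m (Wf n (m + 1, q)) =
            xv n m - MvPolynomial.C (v ^ (q + 1 - (m + 1))) * xv n q := by
          simp only [Wf]
          rw [swapf_sub m hm, swapf_mul m hm, swapf_C m hm, swapf_xv_right m hm,
            swapf_xv_ne m q hm (by omega) (by omega)]
        rw [hsw]
        simp only [Wf]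
        ring
      have hfin : (MvPolynomial.C v * xv n (m + 1) - MvPolynomial.C v⁻¹ * xv n m) * (-1) =
          MvPolynomial.C v⁻¹ * Wf n (m, m + 1) := by
        simp only [Wf]
        rw [show m + 1 + 1 - m = 2 from by omega, ← C_inv_mul_C_sq n]
        ring
      rw [hQ, hQ']
      exact Qpoly_step_aux n m hm G _ _ _ hGinv hfg hfin
    · -- case (iv)
      simp only [List.nil_append] at hAB hLB
      have hMε : matchAux (List.ofFn ε) 1 [] =
          (P0 ++ (matchAux l2 (m + 2) []).1, (matchAux l2 (m + 2) []).2 ++ [m + 1]) := by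
        rw [hstep1, hA, hAB, hLB]
      have hMε' : matchAux (List.ofFn ε') 1 [] =
          (P0 ++ (m, m + 1) :: (matchAux l2 (m + 2) []).1, (matchAux l2 (m + 2) []).2) := by
        rw [hstep1', hB]
      set B0 := (matchAux l2 (m + 2) []).1 with hB0
      set L := (matchAux l2 (m + 2) []).2 with hL
      set G := MvPolynomial.C (v⁻¹ ^ dstat ε) * (((P0 ++ B0).map (Wf n)).prod *
        (L.map (xv n)).prod) with hG
      have hXYsub : ∀ pq ∈ P0 ++ B0, swapf n m (Wf n pq) = Wf n pq := by
        intro pq hpq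
        rcases List.mem_append.mp hpq with hf | hf
        · exact hP0inv pq hf
        · obtain ⟨⟨u1, u2⟩, u3, u4⟩ := hBpairs pq hf
          exact swapf_Wf m hm pq u1 u2 u3 u4
      have hLinv : ∀ x ∈ L, swapf n m (xv n x) = xv n x := by
        intro x hx
        obtain ⟨u1, u2⟩ := hBleft x hx
        exact swapf_xv_ne m x hm u1 u2
      have hGinv : swapf n m G = G := by
        rw [hG, swapf_mul m hm, swapf_C m hm, swapf_mul m hm,
          swapf_list_prod m hm _ _ hXYsub, swapf_list_prod m hm _ _ hLinv]
      have hQ : Qpoly n ε = G * xv n (m + 1) := by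
        rw [Qpoly_eq, hMε, hG]
        simp only [List.map_append, List.map_cons, List.prod_append, List.prod_cons,
          List.map_nil, List.prod_nil]
        ring
      have hQ' : Qpoly n ε' = MvPolynomial.C v⁻¹ * (G * Wf n (m, m + 1)) := by
        rw [Qpoly_eq, hMε', hd, pow_succ, map_mul, hG]
        simp only [List.map_append, List.map_cons, List.prod_append, List.prod_cons]
        ring
      have hfg : xv n (m + 1) - swapf n m (xv n (m + 1)) =
          (xv n m - xv n (m + 1)) * (-1) := by
        rw [swapf_xv_right m hm]
        ring
      have hfin : (MvPolynomial.C v * xv n (m + 1) - MvPolynomial.C v⁻¹ * xv n m) * (-1) =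
          MvPolynomial.C v⁻¹ * Wf n (m, m + 1) := by
        simp only [Wf]
        rw [show m + 1 + 1 - m = 2 from by omega, ← C_inv_mul_C_sq n]
        ring
      rw [hQ, hQ']
      exact Qpoly_step_aux n m hm G _ _ _ hGinv hfg hfin
  · -- nonempty stack p :: S'
    have hp : 1 ≤ p ∧ p < m := hSb p List.mem_cons_self
    have h22 : m + 1 + 1 = m + 2 := by omega
    have hA : matchAux (true :: false :: l2) m (p :: S') =
        ((p, m) :: (matchAux l2 (m + 2) ((m + 1) :: S')).1,
          (matchAux l2 (m + 2) ((m + 1) :: S')).2) := by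
      rw [matchAux_true_cons, matchAux_false, h22]
    have hB : matchAux (false :: true :: l2) m (p :: S') =
        ((m, m + 1) :: (matchAux l2 (m + 2) (p :: S')).1,
          (matchAux l2 (m + 2) (p :: S')).2) := by
      rw [matchAux_false, matchAux_true_cons, h22]
    have hmemB := matchAux_mem l2 (m + 2) (p :: S')
    have hBpairs : ∀ pq ∈ (matchAux l2 (m + 2) (p :: S')).1,
        (pq.1 ≠ m ∧ pq.1 ≠ m + 1) ∧ (pq.2 ≠ m ∧ pq.2 ≠ m + 1) := by
      intro pq hpq
      obtain ⟨hf, hs1, hs2⟩ := hmemB.1 pq hpq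
      rcases hf with hf | hf
      · have := hSb pq.1 hf
        exact ⟨⟨by omega, by omega⟩, by omega, by omega⟩
      · exact ⟨⟨by omega, by omega⟩, by omega, by omega⟩
    have hBleft : ∀ x ∈ (matchAux l2 (m + 2) (p :: S')).2, x ≠ m ∧ x ≠ m + 1 := by
      intro x hx
      rcases hmemB.2 x hx with hf | hf
      · have := hSb x hf
        omega
      · omega
    rcases matchAux_subst l2 (m + 2) [] S' (m + 1) p with
      ⟨X, Y, q, hXa, hXb, hLL⟩ | ⟨hAB, T1, T2, hTa, hTb⟩
    · -- case (i)
      simp only [List.nil_append] at hXa hXb hLL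
      have hq : m + 2 ≤ q ∧ q ≤ n := by
        have hmem : (p, q) ∈ (matchAux l2 (m + 2) (p :: S')).1 := by
          rw [hXb]; exact List.mem_append_right _ List.mem_cons_self
        have := (hmemB.1 _ hmem).2
        rw [hl2len] at this
        omega
      have hMε : matchAux (List.ofFn ε) 1 [] =
          (P0 ++ (p, m) :: (X ++ (m + 1, q) :: Y), (matchAux l2 (m + 2) (p :: S')).2) := by
        rw [hstep1, hA, hXa, hLL]
      have hMε' : matchAux (List.ofFn ε') 1 [] =
          (P0 ++ (m, m + 1) :: (X ++ (p, q) :: Y), (matchAux l2 (m + 2) (p :: S')).2) := by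
        rw [hstep1', hB, hXb]
      set L := (matchAux l2 (m + 2) (p :: S')).2 with hL
      set G := MvPolynomial.C (v⁻¹ ^ dstat ε) * (((P0 ++ (X ++ Y)).map (Wf n)).prod *
        (L.map (xv n)).prod) with hG
      have hXYsub : ∀ pq ∈ P0 ++ (X ++ Y), swapf n m (Wf n pq) = Wf n pq := by
        intro pq hpq
        rcases List.mem_append.mp hpq with hf | hf
        · exact hP0inv pq hf
        · have : pq ∈ (matchAux l2 (m + 2) (p :: S')).1 := by
            rw [hXb]
            rcases List.mem_append.mp hf with hf' | hf'
            · exact List.mem_append_left _ hf'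
            · exact List.mem_append_right _ (List.mem_cons_of_mem _ hf')
          obtain ⟨⟨u1, u2⟩, u3, u4⟩ := hBpairs pq this
          exact swapf_Wf m hm pq u1 u2 u3 u4
      have hLinv : ∀ x ∈ L, swapf n m (xv n x) = xv n x := by
        intro x hx
        obtain ⟨u1, u2⟩ := hBleft x hx
        exact swapf_xv_ne m x hm u1 u2
      have hGinv : swapf n m G = G := by
        rw [hG, swapf_mul m hm, swapf_C m hm, swapf_mul m hm,
          swapf_list_prod m hm _ _ hXYsub, swapf_list_prod m hm _ _ hLinv]
      have hQ : Qpoly n ε = G * (Wf n (p, m) * Wf n (m + 1, q)) := by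
        rw [Qpoly_eq, hMε, hG]
        simp only [List.map_append, List.map_cons, List.prod_append, List.prod_cons]
        ring
      have hQ' : Qpoly n ε' =
          MvPolynomial.C v⁻¹ * (G * (Wf n (m, m + 1) * Wf n (p, q))) := by
        rw [Qpoly_eq, hMε', hd, pow_succ, map_mul, hG]
        simp only [List.map_append, List.map_cons, List.prod_append, List.prod_cons]
        ring
      have hABe : MvPolynomial.C (v ^ (m + 1 - p)) * MvPolynomial.C (v ^ (q + 1 - (m + 1))) =
          (MvPolynomial.C (v ^ (q + 1 - p)) : MvPolynomial (Fin n) F) := by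
        rw [← map_mul, ← pow_add, show m + 1 - p + (q + 1 - (m + 1)) = q + 1 - p from by omega]
      have hfg : Wf n (p, m) * Wf n (m + 1, q) - swapf n m (Wf n (p, m) * Wf n (m + 1, q)) =
          (xv n m - xv n (m + 1)) *
            (MvPolynomial.C (v ^ (q + 1 - p)) * xv n q - xv n p) := by
        have hsw : swapf n m (Wf n (p, m) * Wf n (m + 1, q)) =
            (xv n p - MvPolynomial.C (v ^ (m + 1 - p)) * xv n (m + 1)) *
              (xv n m - MvPolynomial.C (v ^ (q + 1 - (m + 1))) * xv n q) := by
          rw [swapf_mul m hm]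
          simp only [Wf]
          rw [swapf_sub m hm, swapf_mul m hm, swapf_C m hm,
            swapf_xv_ne m p hm (by omega) (by omega), swapf_xv_left m hm,
            swapf_sub m hm, swapf_mul m hm, swapf_C m hm, swapf_xv_right m hm,
            swapf_xv_ne m q hm (by omega) (by omega)]
        rw [hsw]
        simp only [Wf]
        linear_combination ((xv n m - xv n (m + 1)) * xv n q) * hABe
      have hfin : (MvPolynomial.C v * xv n (m + 1) - MvPolynomial.C v⁻¹ * xv n m) *
          (MvPolynomial.C (v ^ (q + 1 - p)) * xv n q - xv n p) =
          MvPolynomial.C v⁻¹ * (Wf n (m, m + 1) * Wf n (p, q)) := by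
        simp only [Wf]
        rw [show m + 1 + 1 - m = 2 from by omega, ← C_inv_mul_C_sq n]
        ring
      rw [hQ, hQ']
      exact Qpoly_step_aux n m hm G _ _ _ hGinv hfg hfin
    · -- case (ii)
      simp only [List.nil_append] at hAB hTa hTb
      have hMε : matchAux (List.ofFn ε) 1 [] =
          (P0 ++ (p, m) :: (matchAux l2 (m + 2) (p :: S')).1, T1 ++ (m + 1) :: T2) := by
        rw [hstep1, hA, hAB, hTa]
      have hMε' : matchAux (List.ofFn ε') 1 [] =
          (P0 ++ (m, m + 1) :: (matchAux l2 (m + 2) (p :: S')).1, T1 ++ p :: T2) := by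
        rw [hstep1', hB, hTb]
      set B0 := (matchAux l2 (m + 2) (p :: S')).1 with hB0
      set G := MvPolynomial.C (v⁻¹ ^ dstat ε) * (((P0 ++ B0).map (Wf n)).prod *
        (((T1 ++ T2).map (xv n)).prod)) with hG
      have hT12 : ∀ x ∈ T1 ++ T2, x ≠ m ∧ x ≠ m + 1 := by
        intro x hx
        apply hBleft
        rw [hTb]
        rcases List.mem_append.mp hx with hf | hf
        · exact List.mem_append_left _ hf
        · exact List.mem_append_right _ (List.mem_cons_of_mem _ hf)
      have hXYsub : ∀ pq ∈ P0 ++ B0, swapf n m (Wf n pq) = Wf n pq := by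
        intro pq hpq
        rcases List.mem_append.mp hpq with hf | hf
        · exact hP0inv pq hf
        · obtain ⟨⟨u1, u2⟩, u3, u4⟩ := hBpairs pq hf
          exact swapf_Wf m hm pq u1 u2 u3 u4
      have hLinv : ∀ x ∈ T1 ++ T2, swapf n m (xv n x) = xv n x := by
        intro x hx
        obtain ⟨u1, u2⟩ := hT12 x hx
        exact swapf_xv_ne m x hm u1 u2
      have hGinv : swapf n m G = G := by
        rw [hG, swapf_mul m hm, swapf_C m hm, swapf_mul m hm,
          swapf_list_prod m hm _ _ hXYsub, swapf_list_prod m hm _ _ hLinv]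
      have hQ : Qpoly n ε = G * (Wf n (p, m) * xv n (m + 1)) := by
        rw [Qpoly_eq, hMε, hG]
        simp only [List.map_append, List.map_cons, List.prod_append, List.prod_cons]
        ring
      have hQ' : Qpoly n ε' = MvPolynomial.C v⁻¹ * (G * (Wf n (m, m + 1) * xv n p)) := by
        rw [Qpoly_eq, hMε', hd, pow_succ, map_mul, hG]
        simp only [List.map_append, List.map_cons, List.prod_append, List.prod_cons]
        ring
      have hfg : Wf n (p, m) * xv n (m + 1) - swapf n m (Wf n (p, m) * xv n (m + 1)) =
          (xv n m - xv n (m + 1)) * (-(xv n p)) := by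
        have hsw : swapf n m (Wf n (p, m) * xv n (m + 1)) =
            (xv n p - MvPolynomial.C (v ^ (m + 1 - p)) * xv n (m + 1)) * xv n m := by
          rw [swapf_mul m hm]
          simp only [Wf]
          rw [swapf_sub m hm, swapf_mul m hm, swapf_C m hm,
            swapf_xv_ne m p hm (by omega) (by omega), swapf_xv_left m hm,
            swapf_xv_right m hm]
        rw [hsw]
        simp only [Wf]
        ring
      have hfin : (MvPolynomial.C v * xv n (m + 1) - MvPolynomial.C v⁻¹ * xv n m) *
          (-(xv n p)) = MvPolynomial.C v⁻¹ * (Wf n (m, m + 1) * xv n p) := by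
        simp only [Wf]
        rw [show m + 1 + 1 - m = 2 from by omega, ← C_inv_mul_C_sq n]
        ring
      rw [hQ, hQ']
      exact Qpoly_step_aux n m hm G _ _ _ hGinv hfg hfin


/-! ### Q of the base sequence -/

lemma matchAux_replicate_true (j pos : ℕ) : matchAux (List.replicate j true) pos [] = ([], []) := by
  induction j generalizing pos with
  | zero => rfl
  | succ j ih => rw [List.replicate_succ, matchAux_true_nil, ih]

lemma matchAux_replicate_false (j pos : ℕ) (st : List ℕ) :
    matchAux (List.replicate j false) pos st =
      ([], ((List.range j).map (pos + ·)).reverse ++ st) := by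
  induction j generalizing pos st with
  | zero => rfl
  | succ j ih =>
    have key : ((List.range (j + 1)).map (pos + ·)).reverse =
        ((List.range j).map (pos + 1 + ·)).reverse ++ [pos] := by
      rw [List.range_succ_eq_map, List.map_cons, List.reverse_cons, List.map_map, Nat.add_zero]
      congr 2
      apply List.map_congr_left
      intro x _
      simp only [Function.comp_apply]
      omega
    rw [List.replicate_succ, matchAux_false, ih, key, List.append_assoc,
      List.singleton_append]

lemma ofFn_oneSeq (n k : ℕ) (hk : k ≤ n) :
    List.ofFn (oneSeq n k) = List.replicate k true ++ List.replicate (n - k) false := by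
  apply List.ext_getElem
  · simp; omega
  · intro i h1 h2
    rw [List.getElem_ofFn]
    by_cases hik : i < k
    · rw [List.getElem_append_left (by simpa using hik), List.getElem_replicate]
      simp [oneSeq, hik]
    · rw [List.getElem_append_right (by simpa using hik), List.getElem_replicate]
      simp only [oneSeq, decide_eq_false_iff_not, not_lt]
      simp only [List.length_ofFn] at h1
      omega

lemma list_prod_range {M : Type*} [CommMonoid M] (f : ℕ → M) (j : ℕ) :
    ((List.range j).map f).prod = ∏ i ∈ Finset.range j, f i := by
  induction j with
  | zero => simp
  | succ j ih =>
    rw [List.range_succ, List.map_append, List.prod_append, Finset.prod_range_succ, ih]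
    simp

lemma dstat_oneSeq (n k : ℕ) : dstat (oneSeq n k) = 0 := by
  rw [dstat, Finset.card_eq_zero, Finset.filter_eq_empty_iff]
  rintro pq -
  rintro ⟨h1, h2, h3⟩
  simp only [oneSeq, decide_eq_false_iff_not, not_lt, decide_eq_true_eq] at h2 h3
  have := Fin.lt_def.mp h1
  omega

lemma Qpoly_oneSeq (n k : ℕ) (hk : k ≤ n) :
    Qpoly n (oneSeq n k) = ∏ p ∈ Finset.Icc (k + 1) n, xv n p := by
  have hM : matchAux (List.ofFn (oneSeq n k)) 1 [] =
      ([], ((List.range (n - k)).map ((k + 1) + ·)).reverse) := by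
    rw [ofFn_oneSeq n k hk, matchAux_append, matchAux_replicate_true,
      matchAux_replicate_false]
    simp only [List.length_replicate, List.append_nil]
    rw [Nat.add_comm 1 k]
  rw [Qpoly, hM, dstat_oneSeq]
  simp only [pow_zero, map_one, List.map_nil, List.prod_nil, mul_one, one_mul,
    List.map_reverse, List.prod_reverse, List.map_map]
  rw [list_prod_range]
  rw [← Finset.Ico_add_one_right_eq_Icc, Finset.prod_Ico_eq_prod_range]
  have h1 : n + 1 - (k + 1) = n - k := by omega
  rw [h1]
  exact Finset.prod_congr rfl (fun i _ => rfl)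


lemma Qpoly_foldr {n : ℕ} (l : List ℕ) (ε : Fin n → Bool) (hg : allgood n l ε) :
    Qpoly n (applyL n l ε) = l.foldr (fun m g => nabla n m g) (Qpoly n ε) := by
  induction l with
  | nil => rfl
  | cons m l ih =>
    obtain ⟨hg1, hg2⟩ := hg
    obtain ⟨hmm, hv1, hv2⟩ := hg2
    rw [applyL_cons, List.foldr_cons, ← ih hg1]
    exact (Qpoly_step hmm.1 hmm.2 hv1 hv2).symm

/-- For every Young diagram λ inside the k×(n−k) rectangle and every
reduced decomposition w_λ = s_(i_ℓ)⋯s_(i_1),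
Q_(w_λ·𝟏) = ∇_(i_ℓ)(⋯(∇_(i_1)(x_(k+1)⋯x_n))⋯). -/
theorem Qpoly_from_nabla (n k : ℕ) (hk : 0 < k) (hkn : k < n)
    (lam : ℕ → ℕ) (hY : IsYoung n k lam)
    (wrd : List ℕ) (hlet : ∀ m ∈ wrd, 1 ≤ m ∧ m < n)
    (hprod : (wrd.map (sperm n)).prod = wperm n k lam)
    (hred : wrd.length = len (wperm n k lam)) :
    Qpoly n (wSt n k hkn.le lam).1 =
      wrd.foldr (fun m g => nabla n m g) (∏ p ∈ Finset.Icc (k + 1) n, xv n p) := by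
  have hE : (wSt n k hkn.le lam).1 = actE (wperm n k lam) (oneSeq n k) := rfl
  have hww : applyL n (wword k lam) (oneSeq n k) = actE (wperm n k lam) (oneSeq n k) := by
    rw [applyL_eq_actE]; rfl
  have hallw : allgood n (wword k lam) (oneSeq n k) := by
    rw [wword_eq_rowsCat]
    exact (rows_all n k lam hY hkn k le_rfl).2
  have h0 : dstat (oneSeq n k) = 0 := dstat_oneSeq n k
  have hdw : dstat (actE (wperm n k lam) (oneSeq n k)) = (wword k lam).length := by
    rw [← hww, dstat_applyL_allgood n _ _ hallw, h0]
    omega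
  have hwrd : applyL n wrd (oneSeq n k) = actE (wperm n k lam) (oneSeq n k) := by
    rw [applyL_eq_actE, hprod]
  have hlen2 : len (wperm n k lam) ≤ (wword k lam).length := by
    have hwp : wperm n k lam = ((wword k lam).map (sperm n)).prod := rfl
    rw [hwp]
    exact len_prod_le _
  have hle3 : dstat (applyL n wrd (oneSeq n k)) ≤ dstat (oneSeq n k) + wrd.length :=
    dstat_applyL_le n wrd (oneSeq n k)
  have heq : dstat (applyL n wrd (oneSeq n k)) = dstat (oneSeq n k) + wrd.length := by
    rw [hwrd, hdw] at hle3 ⊢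
    rw [h0] at hle3 ⊢
    omega
  have hgood : allgood n wrd (oneSeq n k) := allgood_of_dstat n wrd _ heq
  rw [hE, ← hwrd, Qpoly_foldr wrd _ hgood, Qpoly_oneSeq n k hkn.le]

end
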